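/- Let μ be a finite Borel measure on ℝⁿ with μ(ℝⁿ) = 1 belonging to K₁(ℝⁿ), let l ≥ 1 be an integer, and define the signed measure μ' = Σ_{k=1}^{l} (−1)^{k+1} C(l, l−k) μ^{(k)}, where μ^{(k)} denotes the k-fold convolution of μ with itself and C(·,·) is the binomial coefficient. Then 1 − μ̂'(ξ) = (1 − μ̂(ξ))^l for all ξ, and consequently μ' ∈ K_l(ℝⁿ): there are constants 0 < c₁ ≤ c₂ such that c₁ · min{1,|ξ|^{2l}} ≤ |1 − μ̂'(ξ)| ≤ c₂ · min{1,|ξ|^{2l}} for all ξ ∈ ℝⁿ. -/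

import Mathlib

open MeasureTheory Real Set

/-- The Fourier transform `f̂(ξ) = ∫ f(x) e^{-i ξ·x} dx` on `ℝⁿ` (absolutely convergent
for integrable functions). -/
noncomputable def fourierIntegralE {n : ℕ} (f : EuclideanSpace ℝ (Fin n) → ℂ)
    (ξ : EuclideanSpace ℝ (Fin n)) : ℂ :=
  ∫ x : EuclideanSpace ℝ (Fin n), Complex.exp (-(Complex.I * ((inner ℝ ξ x : ℝ) : ℂ))) * f x

/-- The Fourier transform `μ̂(ξ) = ∫ e^{-i ξ·x} dμ(x)` of a (positive) Borel measure. -/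
noncomputable def measureFourier {n : ℕ} (μ : Measure (EuclideanSpace ℝ (Fin n)))
    (ξ : EuclideanSpace ℝ (Fin n)) : ℂ :=
  ∫ x, Complex.exp (-(Complex.I * ((inner ℝ ξ x : ℝ) : ℂ))) ∂μ


/-- The `k`-fold convolution iterate: `convIter μ 0 = μ` and
`convIter μ k = μ^{(k+1)}`, so that `μ^{(k)} = convIter μ (k-1)` for `k ≥ 1`. -/
noncomputable def convIter {n : ℕ} (μ : Measure (EuclideanSpace ℝ (Fin n))) :
    ℕ → Measure (EuclideanSpace ℝ (Fin n))
  | 0 => μ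
  | k + 1 => Measure.conv (convIter μ k) μ

/-- The Fourier transform of the signed measure
`μ' = Σ_{k=1}^{l} (−1)^{k+1} C(l, l−k) μ^{(k)}` (defined by linearity). -/
noncomputable def binomialIterateFourier {n : ℕ} (μ : Measure (EuclideanSpace ℝ (Fin n)))
    (l : ℕ) (ξ : EuclideanSpace ℝ (Fin n)) : ℂ :=
  ∑ k ∈ Finset.Icc 1 l,
    ((-1 : ℂ)) ^ (k + 1) * (Nat.choose l (l - k) : ℂ) * measureFourier (convIter μ (k - 1)) ξ

lemma measureFourier_conv {n : ℕ} (ρ ν : Measure (EuclideanSpace ℝ (Fin n)))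
    [IsFiniteMeasure ρ] [IsFiniteMeasure ν] (ξ : EuclideanSpace ℝ (Fin n)) :
    measureFourier (ρ.conv ν) ξ = measureFourier ρ ξ * measureFourier ν ξ := by
  have h1 : Continuous fun x : EuclideanSpace ℝ (Fin n) => (inner ℝ ξ x : ℝ) :=
    continuous_const.inner continuous_id
  have hcont : Continuous fun x : EuclideanSpace ℝ (Fin n) =>
      Complex.exp (-(Complex.I * ((inner ℝ ξ x : ℝ) : ℂ))) :=
    Complex.continuous_exp.comp ((continuous_const.mul (Complex.continuous_ofReal.comp h1)).neg)
  rw [measureFourier, Measure.conv, integral_map (by fun_prop) hcont.aestronglyMeasurable]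
  have : ∀ p : EuclideanSpace ℝ (Fin n) × EuclideanSpace ℝ (Fin n),
      Complex.exp (-(Complex.I * ((inner ℝ ξ (p.1 + p.2) : ℝ) : ℂ)))
        = Complex.exp (-(Complex.I * ((inner ℝ ξ p.1 : ℝ) : ℂ)))
          * Complex.exp (-(Complex.I * ((inner ℝ ξ p.2 : ℝ) : ℂ))) := by
    intro p
    rw [← Complex.exp_add, inner_add_right]
    push_cast
    ring_nf
  simp_rw [this]
  rw [measureFourier, measureFourier]
  exact integral_prod_mul (fun x => Complex.exp (-(Complex.I * ((inner ℝ ξ x : ℝ) : ℂ))))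
    (fun x => Complex.exp (-(Complex.I * ((inner ℝ ξ x : ℝ) : ℂ))))

instance convIter_finite {n : ℕ} (μ : Measure (EuclideanSpace ℝ (Fin n)))
    [IsFiniteMeasure μ] (k : ℕ) : IsFiniteMeasure (convIter μ k) := by
  induction k with
  | zero => exact ‹_›
  | succ k ih => exact Measure.finite_of_finite_conv _ _

lemma measureFourier_convIter {n : ℕ} (μ : Measure (EuclideanSpace ℝ (Fin n)))
    [IsFiniteMeasure μ] (k : ℕ) (ξ : EuclideanSpace ℝ (Fin n)) :
    measureFourier (convIter μ k) ξ = (measureFourier μ ξ) ^ (k + 1) := by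
  induction k with
  | zero => simp [convIter]
  | succ k ih =>
    rw [convIter, measureFourier_conv, ih]
    ring

lemma binomialIterateFourier_eq {n : ℕ} (μ : Measure (EuclideanSpace ℝ (Fin n)))
    [IsFiniteMeasure μ] (l : ℕ) (ξ : EuclideanSpace ℝ (Fin n)) :
    1 - binomialIterateFourier μ l ξ = (1 - measureFourier μ ξ) ^ l := by
  set z := measureFourier μ ξ with hz
  have hS : binomialIterateFourier μ l ξ
      = ∑ k ∈ Finset.Icc 1 l, ((-1 : ℂ)) ^ (k + 1) * (Nat.choose l k : ℂ) * z ^ k := by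
    apply Finset.sum_congr rfl
    intro k hk
    have hk1 : 1 ≤ k := (Finset.mem_Icc.mp hk).1
    have hkl : k ≤ l := (Finset.mem_Icc.mp hk).2
    rw [measureFourier_convIter, Nat.choose_symm hkl, Nat.sub_add_cancel hk1]
  have hbin : (1 - z) ^ l = ∑ k ∈ Finset.range (l + 1), ((-1 : ℂ)) ^ k * (Nat.choose l k : ℂ) * z ^ k := by
    rw [sub_eq_add_neg, add_comm, add_pow]
    apply Finset.sum_congr rfl
    intro k hk
    rw [neg_pow]
    ring
  have hsplit : ∑ k ∈ Finset.range (l + 1), ((-1 : ℂ)) ^ k * (Nat.choose l k : ℂ) * z ^ k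
      = 1 + ∑ k ∈ Finset.Icc 1 l, ((-1 : ℂ)) ^ k * (Nat.choose l k : ℂ) * z ^ k := by
    have : Finset.range (l + 1) = insert 0 (Finset.Icc 1 l) := by
      ext k
      simp [Finset.mem_range, Finset.mem_insert, Finset.mem_Icc, Nat.lt_succ_iff,
        Nat.one_le_iff_ne_zero]
      omega
    rw [this, Finset.sum_insert (by simp)]
    simp
  rw [hS, hbin, hsplit]
  have : ∑ k ∈ Finset.Icc 1 l, ((-1 : ℂ)) ^ k * (Nat.choose l k : ℂ) * z ^ k
      = -∑ k ∈ Finset.Icc 1 l, ((-1 : ℂ)) ^ (k + 1) * (Nat.choose l k : ℂ) * z ^ k := by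
    rw [← Finset.sum_neg_distrib]
    apply Finset.sum_congr rfl
    intro k _
    rw [pow_succ]
    ring
  rw [this]
  ring

lemma min_one_pow (a : ℝ) (ha : 0 ≤ a) (l : ℕ) : (min 1 a) ^ l = min 1 (a ^ l) := by
  rcases le_total a 1 with h | h
  · rw [min_eq_right h, min_eq_right (pow_le_one₀ ha h)]
  · rw [min_eq_left h, min_eq_left (one_le_pow₀ h), one_pow]

/-- if `μ` is a finite Borel measure with `μ(ℝⁿ) = 1` lying in `K₁(ℝⁿ)`
and `μ' = Σ_{k=1}^{l} (−1)^{k+1} C(l,l−k) μ^{(k)}`, then `1 − μ̂'(ξ) = (1 − μ̂(ξ))^l`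
and `μ' ∈ K_l(ℝⁿ)`: `|1 − μ̂'(ξ)| ≍ min{1,|ξ|^{2l}}`. -/
theorem binomial_iterate_mem_Kl (n : ℕ) (μ : Measure (EuclideanSpace ℝ (Fin n)))
    [IsFiniteMeasure μ] (hmass : μ Set.univ = 1)
    (hK : ∃ b₁ b₂ : ℝ, 0 < b₁ ∧ b₁ ≤ b₂ ∧
      ∀ ξ : EuclideanSpace ℝ (Fin n),
        b₁ * min 1 (‖ξ‖ ^ 2) ≤ ‖1 - measureFourier μ ξ‖ ∧
          ‖1 - measureFourier μ ξ‖ ≤ b₂ * min 1 (‖ξ‖ ^ 2))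
    (l : ℕ) (hl : 1 ≤ l) :
    (∀ ξ : EuclideanSpace ℝ (Fin n),
        1 - binomialIterateFourier μ l ξ = (1 - measureFourier μ ξ) ^ l) ∧
      ∃ c₁ c₂ : ℝ, 0 < c₁ ∧ c₁ ≤ c₂ ∧
        ∀ ξ : EuclideanSpace ℝ (Fin n),
          c₁ * min 1 (‖ξ‖ ^ (2 * l)) ≤ ‖1 - binomialIterateFourier μ l ξ‖ ∧
            ‖1 - binomialIterateFourier μ l ξ‖ ≤ c₂ * min 1 (‖ξ‖ ^ (2 * l)) := by
  obtain ⟨b₁, b₂, hb₁, hb₁₂, hb⟩ := hK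
  have heq := binomialIterateFourier_eq μ l
  refine ⟨heq, b₁ ^ l, b₂ ^ l, pow_pos hb₁ l, pow_le_pow_left₀ hb₁.le hb₁₂ l, fun ξ => ?_⟩
  have hmin : 0 ≤ min 1 (‖ξ‖ ^ 2) := le_min zero_le_one (by positivity)
  have hnorm : ‖1 - binomialIterateFourier μ l ξ‖ = ‖1 - measureFourier μ ξ‖ ^ l := by
    rw [heq ξ, norm_pow]
  have hpowmin : min 1 (‖ξ‖ ^ (2 * l)) = (min 1 (‖ξ‖ ^ 2)) ^ l := by
    rw [min_one_pow _ (by positivity), ← pow_mul]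
  constructor
  · rw [hnorm, hpowmin, ← mul_pow]
    exact pow_le_pow_left₀ (by positivity) (hb ξ).1 l
  · rw [hnorm, hpowmin, ← mul_pow]
    exact pow_le_pow_left₀ (norm_nonneg _) (hb ξ).2 l
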